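/- (First-order expansion of the Floquet discriminant in the coupling constant.) Let E > 0 and let w : ℝ → ℝ be continuous, 1-periodic and bounded. For λ ∈ ℝ, let Φ_λ and Ψ_λ be the unique C² solutions of y''(x) = (λ w(x) − E) y(x) on ℝ with Φ_λ(0) = 1, Φ_λ'(0) = 0, Ψ_λ(0) = 0, Ψ_λ'(0) = 1, and define the discriminant D(λ) := Φ_λ(1) + Ψ_λ'(1). Then D(0) = 2 cos(√E), the function λ ↦ D(λ) is differentiable at λ = 0, and D'(0) = (sin(√E)/√E) ∫₀¹ w(s) ds; equivalently, D(λ) = 2 cos(√E) + λ (∫₀¹ w(s) ds) · sin(√E)/√E + o(λ) as λ → 0. -/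

import Mathlib

open Real intervalIntegral

lemma rep_aux (E r lam : ℝ) (hr : 0 < r) (hr2 : r^2 = E) (w u : ℝ → ℝ)
    (hw : Continuous w) (hu : ContDiff ℝ 2 u)
    (hode : ∀ x, deriv (deriv u) x = (lam * w x - E) * u x) (x : ℝ) :
    u x = (u 0 - lam * ∫ σ in (0:ℝ)..x, w σ * u σ * (Real.sin (r*σ)/r)) * Real.cos (r*x)
        + (deriv u 0 + lam * ∫ σ in (0:ℝ)..x, w σ * u σ * Real.cos (r*σ)) * (Real.sin (r*x)/r)
    ∧ deriv u x
      = (u 0 - lam * ∫ σ in (0:ℝ)..x, w σ * u σ * (Real.sin (r*σ)/r)) * (-(r * Real.sin (r*x)))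
        + (deriv u 0 + lam * ∫ σ in (0:ℝ)..x, w σ * u σ * Real.cos (r*σ)) * Real.cos (r*x) := by
  have hrne : r ≠ 0 := hr.ne'
  have hu1 : Differentiable ℝ u := hu.differentiable (by norm_num)
  have hud : ContDiff ℝ 1 (deriv u) := by
    have := (contDiff_succ_iff_deriv (n := 1) (f := u)).mp (by norm_num at hu ⊢; exact hu)
    exact this.2.2
  have hud1 : Differentiable ℝ (deriv u) := hud.differentiable (by norm_num)
  have hcont_u : Continuous u := hu1.continuous
  -- derivative facts for trig
  have hc : ∀ t : ℝ, HasDerivAt (fun t => Real.cos (r*t)) (-(r * Real.sin (r*t))) t := by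
    intro t
    have h1 : HasDerivAt (fun t : ℝ => r * t) r t := by
      simpa using (hasDerivAt_id t).const_mul r
    simpa [mul_comm] using h1.cos
  have hs : ∀ t : ℝ, HasDerivAt (fun t => Real.sin (r*t)/r) (Real.cos (r*t)) t := by
    intro t
    have h1 : HasDerivAt (fun t : ℝ => r * t) r t := by
      simpa using (hasDerivAt_id t).const_mul r
    have := ((Real.hasDerivAt_sin (r*t)).comp t h1).div_const r
    simpa [mul_comm, mul_div_assoc, hrne] using this
  -- A and B with their derivatives
  have hA : ∀ t : ℝ, HasDerivAt (fun t => u t * Real.cos (r*t) - deriv u t * (Real.sin (r*t)/r))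
      (-(lam * (w t * u t * (Real.sin (r*t)/r)))) t := by
    intro t
    have h1 := ((hu1 t).hasDerivAt).mul (hc t)
    have h2 := ((hud1 t).hasDerivAt).mul (hs t)
    have h3 := h1.sub h2
    refine h3.congr_deriv ?_
    rw [hode t]
    field_simp
    linear_combination (-(u t * Real.sin (r*t))) * hr2
  have hB : ∀ t : ℝ, HasDerivAt (fun t => deriv u t * Real.cos (r*t) + u t * (r * Real.sin (r*t)))
      (lam * (w t * u t * Real.cos (r*t))) t := by
    intro t
    have h1 := ((hud1 t).hasDerivAt).mul (hc t)
    have hsin : HasDerivAt (fun t : ℝ => r * Real.sin (r*t)) (r * (r * Real.cos (r*t))) t := by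
      have h1 : HasDerivAt (fun t : ℝ => r * t) r t := by
        simpa using (hasDerivAt_id t).const_mul r
      have := ((Real.hasDerivAt_sin (r*t)).comp t h1).const_mul r
      simpa [mul_comm, mul_assoc] using this
    have h2 := ((hu1 t).hasDerivAt).mul hsin
    have h3 := h1.add h2
    refine h3.congr_deriv ?_
    rw [hode t]
    linear_combination (u t * Real.cos (r*t)) * hr2
  -- integrability
  have hint1 : IntervalIntegrable (fun σ => -(lam * (w σ * u σ * (Real.sin (r*σ)/r)))) MeasureTheory.volume 0 x := by
    apply Continuous.intervalIntegrable; fun_prop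
  have hint2 : IntervalIntegrable (fun σ => lam * (w σ * u σ * Real.cos (r*σ))) MeasureTheory.volume 0 x := by
    apply Continuous.intervalIntegrable; fun_prop
  have hAx : u x * Real.cos (r*x) - deriv u x * (Real.sin (r*x)/r)
      = u 0 - lam * ∫ σ in (0:ℝ)..x, w σ * u σ * (Real.sin (r*σ)/r) := by
    have := intervalIntegral.integral_eq_sub_of_hasDerivAt (fun t _ => hA t) hint1
    have h0 : (fun t => u t * Real.cos (r*t) - deriv u t * (Real.sin (r*t)/r)) 0 = u 0 := by
      simp
    rw [intervalIntegral.integral_neg, intervalIntegral.integral_const_mul] at this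
    simp only [h0] at this
    linarith [this]
  have hBx : deriv u x * Real.cos (r*x) + u x * (r * Real.sin (r*x))
      = deriv u 0 + lam * ∫ σ in (0:ℝ)..x, w σ * u σ * Real.cos (r*σ) := by
    have := intervalIntegral.integral_eq_sub_of_hasDerivAt (fun t _ => hB t) hint2
    have h0 : (fun t => deriv u t * Real.cos (r*t) + u t * (r * Real.sin (r*t))) 0 = deriv u 0 := by
      simp
    rw [intervalIntegral.integral_const_mul] at this
    simp only [h0] at this
    linarith [this]
  constructor
  · rw [← hAx, ← hBx]
    field_simp
    linear_combination (-(u x * r)) * Real.sin_sq_add_cos_sq (r*x)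
  · rw [← hAx, ← hBx]
    field_simp
    linear_combination (-(deriv u x)) * Real.sin_sq_add_cos_sq (r*x)

lemma integral_bd (r C M : ℝ) (hr : 0 < r) (hC : 0 ≤ C) (hM : 0 ≤ M)
    (w u f : ℝ → ℝ) (hwb : ∀ x, |w x| ≤ C)
    (hMle : ∀ y ∈ Set.Icc (0:ℝ) 1, |u y| ≤ M)
    (F : ℝ) (hF : 0 ≤ F) (hfb : ∀ y, |f y| ≤ F)
    (x : ℝ) (hx : x ∈ Set.Icc (0:ℝ) 1) :
    |∫ σ in (0:ℝ)..x, w σ * u σ * f σ| ≤ C * M * F := by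
  have h := intervalIntegral.norm_integral_le_of_norm_le_const
      (C := C * M * F) (f := fun σ => w σ * u σ * f σ) (a := 0) (b := x) ?_
  · calc |∫ σ in (0:ℝ)..x, w σ * u σ * f σ|
        ≤ C * M * F * |x - 0| := h
      _ ≤ C * M * F * 1 := by
          apply mul_le_mul_of_nonneg_left _ (by positivity)
          rw [sub_zero, abs_of_nonneg hx.1]; exact hx.2
      _ = C * M * F := by ring
  · intro σ hσ
    rw [Set.uIoc_of_le hx.1] at hσ
    have hσ' : σ ∈ Set.Icc (0:ℝ) 1 := ⟨hσ.1.le, hσ.2.trans hx.2⟩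
    have h1 : |w σ| ≤ C := hwb σ
    have h2 : |u σ| ≤ M := hMle σ hσ'
    have h3 : |f σ| ≤ F := hfb σ
    rw [Real.norm_eq_abs, abs_mul, abs_mul]
    exact mul_le_mul (mul_le_mul h1 h2 (abs_nonneg _) hC) h3 (abs_nonneg _) (by positivity)

lemma bound_aux (E r lam C : ℝ) (hr : 0 < r) (hr2 : r^2 = E) (hC : 0 ≤ C)
    (w u : ℝ → ℝ) (hw : Continuous w) (hwb : ∀ x, |w x| ≤ C)
    (hu : ContDiff ℝ 2 u)
    (hode : ∀ x, deriv (deriv u) x = (lam * w x - E) * u x)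
    (hsmall : 4 * |lam| * C ≤ r) :
    ∀ x ∈ Set.Icc (0:ℝ) 1,
      |u x - (u 0 * Real.cos (r*x) + deriv u 0 * (Real.sin (r*x)/r))|
        ≤ 4 * |lam| * C * (|u 0| + |deriv u 0| / r) / r := by
  have hrne : r ≠ 0 := hr.ne'
  have hcont : Continuous u := (hu.differentiable (by norm_num)).continuous
  set N := |u 0| + |deriv u 0| / r with hN
  have hN0 : 0 ≤ N := by positivity
  obtain ⟨x₀, hx₀, hmax⟩ := (isCompact_Icc (a := (0:ℝ)) (b := 1)).exists_isMaxOn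
    ⟨0, by norm_num⟩ (continuous_abs.comp hcont).continuousOn
  set M := |u x₀| with hM
  have hM0 : 0 ≤ M := abs_nonneg _
  have hMle : ∀ y ∈ Set.Icc (0:ℝ) 1, |u y| ≤ M := fun y hy => hmax hy
  have hsb : ∀ y : ℝ, |Real.sin (r*y)/r| ≤ 1/r := by
    intro y
    rw [abs_div, abs_of_pos hr]
    gcongr <;> first | exact abs_sin_le_one (r*y) | exact hr.le | positivity
  have hcb : ∀ y : ℝ, |Real.cos (r*y)| ≤ 1 := fun y => abs_cos_le_one (r*y)
  have key : ∀ x ∈ Set.Icc (0:ℝ) 1,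
      |u x - (u 0 * Real.cos (r*x) + deriv u 0 * (Real.sin (r*x)/r))|
        ≤ 2 * |lam| * C * M / r := by
    intro x hx
    obtain ⟨hrep, -⟩ := rep_aux E r lam hr hr2 w u hw hu hode x
    have hIs := integral_bd r C M hr hC hM0 w u _ hwb hMle (1/r) (by positivity) hsb x hx
    have hIc := integral_bd r C M hr hC hM0 w u _ hwb hMle 1 one_pos.le hcb x hx
    have heq : u x - (u 0 * Real.cos (r*x) + deriv u 0 * (Real.sin (r*x)/r))
        = (-lam * ∫ σ in (0:ℝ)..x, w σ * u σ * (Real.sin (r*σ)/r)) * Real.cos (r*x)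
          + (lam * ∫ σ in (0:ℝ)..x, w σ * u σ * Real.cos (r*σ)) * (Real.sin (r*x)/r) := by
      rw [hrep]; ring
    rw [heq]
    calc |(-lam * ∫ σ in (0:ℝ)..x, w σ * u σ * (Real.sin (r*σ)/r)) * Real.cos (r*x)
          + (lam * ∫ σ in (0:ℝ)..x, w σ * u σ * Real.cos (r*σ)) * (Real.sin (r*x)/r)|
        ≤ |(-lam * ∫ σ in (0:ℝ)..x, w σ * u σ * (Real.sin (r*σ)/r)) * Real.cos (r*x)|
          + |(lam * ∫ σ in (0:ℝ)..x, w σ * u σ * Real.cos (r*σ)) * (Real.sin (r*x)/r)| := abs_add_le _ _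
      _ ≤ |lam| * (C * M * (1/r)) * 1 + |lam| * (C * M * 1) * (1/r) := by
          rw [abs_mul, abs_mul, abs_mul, abs_mul, abs_neg]
          gcongr <;> first
            | exact hIs | exact hIc | exact hcb x | exact hsb x | positivity
      _ = 2 * |lam| * C * M / r := by ring
  -- self-bound to get M ≤ 2 N
  have hbase : |u 0 * Real.cos (r*x₀) + deriv u 0 * (Real.sin (r*x₀)/r)| ≤ N := by
    calc |u 0 * Real.cos (r*x₀) + deriv u 0 * (Real.sin (r*x₀)/r)|
        ≤ |u 0 * Real.cos (r*x₀)| + |deriv u 0 * (Real.sin (r*x₀)/r)| := abs_add_le _ _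
      _ ≤ |u 0| * 1 + |deriv u 0| * (1/r) := by
          rw [abs_mul, abs_mul]
          gcongr
          · exact hcb x₀
          · exact hsb x₀
      _ = N := by rw [hN]; ring
  have hMN : M ≤ 2 * N := by
    have h1 : M ≤ N + 2 * |lam| * C * M / r := by
      have := key x₀ hx₀
      calc M = |u x₀| := rfl
        _ ≤ |u x₀ - (u 0 * Real.cos (r*x₀) + deriv u 0 * (Real.sin (r*x₀)/r))|
            + |u 0 * Real.cos (r*x₀) + deriv u 0 * (Real.sin (r*x₀)/r)| := by
              have := abs_sub_abs_le_abs_sub (u x₀) (u 0 * Real.cos (r*x₀) + deriv u 0 * (Real.sin (r*x₀)/r))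
              have h2 := abs_add_le (u x₀ - (u 0 * Real.cos (r*x₀) + deriv u 0 * (Real.sin (r*x₀)/r)))
                (u 0 * Real.cos (r*x₀) + deriv u 0 * (Real.sin (r*x₀)/r))
              simpa using h2
        _ ≤ N + 2 * |lam| * C * M / r := by linarith [key x₀ hx₀, hbase]
    have h2 : 2 * |lam| * C * M / r ≤ M / 2 := by
      rw [div_le_iff₀ hr]
      nlinarith [mul_le_mul_of_nonneg_right hsmall hM0]
    clear_value M N
    linarith [h1, h2]
  intro x hx
  have h3 : 2 * |lam| * C * M / r ≤ 4 * |lam| * C * N / r := by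
    have he : (4:ℝ) * |lam| * C * N / r = 2 * |lam| * C * (2*N) / r := by ring
    rw [he]
    gcongr
  exact (key x hx).trans h3

lemma intdiff (C ε F : ℝ) (hC : 0 ≤ C) (hε : 0 ≤ ε) (hF : 0 ≤ F)
    (w g h f : ℝ → ℝ) (hw : Continuous w) (hg : Continuous g) (hh : Continuous h)
    (hf : Continuous f) (hwb : ∀ x, |w x| ≤ C)
    (hgh : ∀ x ∈ Set.Icc (0:ℝ) 1, |g x - h x| ≤ ε) (hfb : ∀ x, |f x| ≤ F) :
    |(∫ σ in (0:ℝ)..1, w σ * g σ * f σ) - ∫ σ in (0:ℝ)..1, w σ * h σ * f σ| ≤ C * ε * F := by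
  have hint1 : IntervalIntegrable (fun σ => w σ * g σ * f σ) MeasureTheory.volume 0 1 := by
    apply Continuous.intervalIntegrable; fun_prop
  have hint2 : IntervalIntegrable (fun σ => w σ * h σ * f σ) MeasureTheory.volume 0 1 := by
    apply Continuous.intervalIntegrable; fun_prop
  rw [← intervalIntegral.integral_sub hint1 hint2]
  have hb := intervalIntegral.norm_integral_le_of_norm_le_const
    (C := C * ε * F) (f := fun σ => w σ * g σ * f σ - w σ * h σ * f σ) (a := 0) (b := 1) ?_
  · simpa [Real.norm_eq_abs] using hb
  · intro σ hσ
    rw [Set.uIoc_of_le (by norm_num : (0:ℝ) ≤ 1)] at hσ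
    have hσ' : σ ∈ Set.Icc (0:ℝ) 1 := ⟨hσ.1.le, hσ.2⟩
    simp only [Real.norm_eq_abs]
    rw [show w σ * g σ * f σ - w σ * h σ * f σ = w σ * (g σ - h σ) * f σ from by ring,
      abs_mul, abs_mul]
    exact mul_le_mul (mul_le_mul (hwb σ) (hgh σ hσ') (abs_nonneg _) hC) (hfb σ)
      (abs_nonneg _) (by positivity)

/-- First-order expansion of the Floquet discriminant `D(λ) = Φ_λ(1) + Ψ_λ'(1)` for
`y'' = (λ w − E) y` in the coupling constant at `λ = 0`:
`D(0) = 2 cos √E` and `D'(0) = (sin √E / √E) ∫₀¹ w`. -/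
theorem stmt_5 (E : ℝ) (hE : 0 < E) (w : ℝ → ℝ) (hw_cont : Continuous w)
    (hw_per : Function.Periodic w 1) (hw_bdd : ∃ C : ℝ, ∀ x, |w x| ≤ C)
    (Φ Ψ : ℝ → ℝ → ℝ)
    (hΦ_smooth : ∀ lam, ContDiff ℝ 2 (Φ lam))
    (hΦ_ode : ∀ lam x, deriv (deriv (Φ lam)) x = (lam * w x - E) * Φ lam x)
    (hΦ0 : ∀ lam, Φ lam 0 = 1) (hΦ'0 : ∀ lam, deriv (Φ lam) 0 = 0)
    (hΨ_smooth : ∀ lam, ContDiff ℝ 2 (Ψ lam))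
    (hΨ_ode : ∀ lam x, deriv (deriv (Ψ lam)) x = (lam * w x - E) * Ψ lam x)
    (hΨ0 : ∀ lam, Ψ lam 0 = 0) (hΨ'0 : ∀ lam, deriv (Ψ lam) 0 = 1)
    (D : ℝ → ℝ) (hD : ∀ lam, D lam = Φ lam 1 + deriv (Ψ lam) 1) :
    D 0 = 2 * Real.cos (Real.sqrt E) ∧
    HasDerivAt D
      ((Real.sin (Real.sqrt E) / Real.sqrt E) * ∫ s in (0 : ℝ)..1, w s) 0 := by
  obtain ⟨C, hwb⟩ := hw_bdd
  have hC : 0 ≤ C := (abs_nonneg (w 0)).trans (hwb 0)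
  set r := Real.sqrt E with hrdef
  have hr : 0 < r := Real.sqrt_pos.mpr hE
  have hrne : r ≠ 0 := hr.ne'
  have hr2 : r^2 = E := Real.sq_sqrt hE.le
  -- the four integrals
  set IΦs : ℝ → ℝ := fun lam => ∫ σ in (0:ℝ)..1, w σ * Φ lam σ * (Real.sin (r*σ)/r) with hIΦs
  set IΦc : ℝ → ℝ := fun lam => ∫ σ in (0:ℝ)..1, w σ * Φ lam σ * Real.cos (r*σ) with hIΦc
  set IΨs : ℝ → ℝ := fun lam => ∫ σ in (0:ℝ)..1, w σ * Ψ lam σ * (Real.sin (r*σ)/r) with hIΨs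
  set IΨc : ℝ → ℝ := fun lam => ∫ σ in (0:ℝ)..1, w σ * Ψ lam σ * Real.cos (r*σ) with hIΨc
  set G : ℝ → ℝ := fun lam => -(Real.cos r) * IΦs lam + (Real.sin r / r) * IΦc lam
      + (r * Real.sin r) * IΨs lam + Real.cos r * IΨc lam with hGdef
  -- D lam = 2 cos r + lam * G lam
  have hDG : ∀ lam, D lam = 2 * Real.cos r + lam * G lam := by
    intro lam
    have h1 := (rep_aux E r lam hr hr2 w (Φ lam) hw_cont (hΦ_smooth lam) (hΦ_ode lam) 1).1
    have h2 := (rep_aux E r lam hr hr2 w (Ψ lam) hw_cont (hΨ_smooth lam) (hΨ_ode lam) 1).2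
    rw [hΦ0 lam, hΦ'0 lam, mul_one] at h1
    rw [hΨ0 lam, hΨ'0 lam, mul_one] at h2
    rw [hD lam, h1, h2, hGdef]
    simp only [hIΦs, hIΦc, hIΨs, hIΨc]
    ring
  -- Φ 0 and Ψ 0 explicitly
  have hΦ0fun : ∀ σ : ℝ, Φ 0 σ = Real.cos (r*σ) := by
    intro σ
    have h1 := (rep_aux E r 0 hr hr2 w (Φ 0) hw_cont (hΦ_smooth 0) (hΦ_ode 0) σ).1
    simpa [hΦ0 0, hΦ'0 0] using h1
  have hΨ0fun : ∀ σ : ℝ, Ψ 0 σ = Real.sin (r*σ)/r := by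
    intro σ
    have h1 := (rep_aux E r 0 hr hr2 w (Ψ 0) hw_cont (hΨ_smooth 0) (hΨ_ode 0) σ).1
    simpa [hΨ0 0, hΨ'0 0] using h1
  -- value of G 0
  have hG0 : G 0 = (Real.sin r / r) * ∫ s in (0:ℝ)..1, w s := by
    have e1 : IΦs 0 = ∫ σ in (0:ℝ)..1, w σ * Real.cos (r*σ) * (Real.sin (r*σ)/r) := by
      rw [hIΦs]
      exact intervalIntegral.integral_congr (fun σ _ => by rw [hΦ0fun σ])
    have e2 : IΦc 0 = ∫ σ in (0:ℝ)..1, w σ * Real.cos (r*σ) * Real.cos (r*σ) := by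
      rw [hIΦc]
      exact intervalIntegral.integral_congr (fun σ _ => by rw [hΦ0fun σ])
    have e3 : IΨs 0 = ∫ σ in (0:ℝ)..1, w σ * (Real.sin (r*σ)/r) * (Real.sin (r*σ)/r) := by
      rw [hIΨs]
      exact intervalIntegral.integral_congr (fun σ _ => by rw [hΨ0fun σ])
    have e4 : IΨc 0 = ∫ σ in (0:ℝ)..1, w σ * (Real.sin (r*σ)/r) * Real.cos (r*σ) := by
      rw [hIΨc]
      exact intervalIntegral.integral_congr (fun σ _ => by rw [hΨ0fun σ])
    have e5 : IΦs 0 = IΨc 0 := by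
      rw [e1, e4]
      exact intervalIntegral.integral_congr (fun σ _ => by ring)
    rw [hGdef]
    simp only
    rw [e5, e2, e3]
    have key : (Real.sin r / r) * (∫ σ in (0:ℝ)..1, w σ * Real.cos (r*σ) * Real.cos (r*σ))
        + (r * Real.sin r) * (∫ σ in (0:ℝ)..1, w σ * (Real.sin (r*σ)/r) * (Real.sin (r*σ)/r))
        = (Real.sin r / r) * ∫ s in (0:ℝ)..1, w s := by
      rw [← intervalIntegral.integral_const_mul, ← intervalIntegral.integral_const_mul,
        ← intervalIntegral.integral_add (by apply Continuous.intervalIntegrable; fun_prop)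
          (by apply Continuous.intervalIntegrable; fun_prop),
        ← intervalIntegral.integral_const_mul]
      apply intervalIntegral.integral_congr
      intro σ _
      field_simp
      linear_combination (Real.sin r * w σ) * Real.sin_sq_add_cos_sq (r*σ)
    linarith [key]
  -- deviation bounds for small lam
  set δ : ℝ := r / (4*C+1) with hδdef
  have hδ : 0 < δ := by positivity
  have hsmall : ∀ lam : ℝ, |lam| ≤ δ → 4 * |lam| * C ≤ r := by
    intro lam hlam
    have h4 : (0:ℝ) < 4*C+1 := by linarith
    have h1 : 4 * |lam| * C ≤ 4 * δ * C := by
      have := abs_nonneg lam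
      nlinarith
    have h2 : 4 * δ * C ≤ r := by
      rw [hδdef, show (4:ℝ) * (r/(4*C+1)) * C = 4*r*C/(4*C+1) from by ring,
        div_le_iff₀ h4]
      nlinarith [hr.le]
    linarith
  have hΦbd : ∀ lam : ℝ, |lam| ≤ δ → ∀ x ∈ Set.Icc (0:ℝ) 1,
      |Φ lam x - Φ 0 x| ≤ 4 * |lam| * C / r := by
    intro lam hlam x hx
    have hb := bound_aux E r lam C hr hr2 hC w (Φ lam) hw_cont hwb (hΦ_smooth lam)
      (hΦ_ode lam) (hsmall lam hlam) x hx
    rw [hΦ0 lam, hΦ'0 lam] at hb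
    rw [hΦ0fun x]
    simpa using hb
  have hΨbd : ∀ lam : ℝ, |lam| ≤ δ → ∀ x ∈ Set.Icc (0:ℝ) 1,
      |Ψ lam x - Ψ 0 x| ≤ 4 * |lam| * C * (1/r) / r := by
    intro lam hlam x hx
    have hb := bound_aux E r lam C hr hr2 hC w (Ψ lam) hw_cont hwb (hΨ_smooth lam)
      (hΨ_ode lam) (hsmall lam hlam) x hx
    rw [hΨ0 lam, hΨ'0 lam] at hb
    rw [hΨ0fun x]
    simpa using hb
  -- bounds on the integral differences
  have hsb : ∀ y : ℝ, |Real.sin (r*y)/r| ≤ 1/r := by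
    intro y
    rw [abs_div, abs_of_pos hr]
    gcongr <;> first | exact abs_sin_le_one (r*y) | exact hr.le | positivity
  have hcb : ∀ y : ℝ, |Real.cos (r*y)| ≤ 1 := fun y => abs_cos_le_one (r*y)
  set K : ℝ := 16 * C^2 / r^2 with hKdef
  have hGd : ∀ lam : ℝ, |lam| ≤ δ → |G lam - G 0| ≤ K * |lam| := by
    intro lam hlam
    have hcΦ : Continuous (Φ lam) := (hΦ_smooth lam).continuous
    have hcΦ0 : Continuous (Φ 0) := (hΦ_smooth 0).continuous
    have hcΨ : Continuous (Ψ lam) := (hΨ_smooth lam).continuous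
    have hcΨ0 : Continuous (Ψ 0) := (hΨ_smooth 0).continuous
    have d1 : |IΦs lam - IΦs 0| ≤ C * (4 * |lam| * C / r) * (1/r) :=
      intdiff C _ _ hC (by positivity) (by positivity) w (Φ lam) (Φ 0) _
        hw_cont hcΦ hcΦ0 (by fun_prop) hwb (hΦbd lam hlam) hsb
    have d2 : |IΦc lam - IΦc 0| ≤ C * (4 * |lam| * C / r) * 1 :=
      intdiff C _ _ hC (by positivity) (by norm_num) w (Φ lam) (Φ 0) _
        hw_cont hcΦ hcΦ0 (by fun_prop) hwb (hΦbd lam hlam) hcb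
    have d3 : |IΨs lam - IΨs 0| ≤ C * (4 * |lam| * C * (1/r) / r) * (1/r) :=
      intdiff C _ _ hC (by positivity) (by positivity) w (Ψ lam) (Ψ 0) _
        hw_cont hcΨ hcΨ0 (by fun_prop) hwb (hΨbd lam hlam) hsb
    have d4 : |IΨc lam - IΨc 0| ≤ C * (4 * |lam| * C * (1/r) / r) * 1 :=
      intdiff C _ _ hC (by positivity) (by norm_num) w (Ψ lam) (Ψ 0) _
        hw_cont hcΨ hcΨ0 (by fun_prop) hwb (hΨbd lam hlam) hcb
    have heq : G lam - G 0 = -(Real.cos r) * (IΦs lam - IΦs 0)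
        + (Real.sin r / r) * (IΦc lam - IΦc 0)
        + (r * Real.sin r) * (IΨs lam - IΨs 0)
        + Real.cos r * (IΨc lam - IΨc 0) := by
      rw [hGdef]; ring
    have hcr : |Real.cos r| ≤ 1 := abs_cos_le_one r
    have hsr : |Real.sin r / r| ≤ 1/r := by
      rw [abs_div, abs_of_pos hr]
      gcongr <;> first | exact abs_sin_le_one r | exact hr.le | positivity
    have hrs : |r * Real.sin r| ≤ r := by
      rw [abs_mul, abs_of_pos hr]
      calc r * |Real.sin r| ≤ r * 1 := by gcongr; exact abs_sin_le_one r
        _ = r := mul_one r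
    rw [heq]
    calc |-(Real.cos r) * (IΦs lam - IΦs 0) + (Real.sin r / r) * (IΦc lam - IΦc 0)
          + (r * Real.sin r) * (IΨs lam - IΨs 0) + Real.cos r * (IΨc lam - IΨc 0)|
        ≤ |(-(Real.cos r)) * (IΦs lam - IΦs 0)| + |(Real.sin r / r) * (IΦc lam - IΦc 0)|
          + |(r * Real.sin r) * (IΨs lam - IΨs 0)| + |Real.cos r * (IΨc lam - IΨc 0)| := by
          calc |-(Real.cos r) * (IΦs lam - IΦs 0) + (Real.sin r / r) * (IΦc lam - IΦc 0)
              + (r * Real.sin r) * (IΨs lam - IΨs 0) + Real.cos r * (IΨc lam - IΨc 0)|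
              ≤ |(-(Real.cos r)) * (IΦs lam - IΦs 0) + (Real.sin r / r) * (IΦc lam - IΦc 0)
                + (r * Real.sin r) * (IΨs lam - IΨs 0)| + |Real.cos r * (IΨc lam - IΨc 0)| :=
                abs_add_le _ _
            _ ≤ (|(-(Real.cos r)) * (IΦs lam - IΦs 0) + (Real.sin r / r) * (IΦc lam - IΦc 0)|
                + |(r * Real.sin r) * (IΨs lam - IΨs 0)|) + |Real.cos r * (IΨc lam - IΨc 0)| :=
                add_le_add_left (abs_add_le _ _) _
            _ ≤ ((|(-(Real.cos r)) * (IΦs lam - IΦs 0)| + |(Real.sin r / r) * (IΦc lam - IΦc 0)|)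
                + |(r * Real.sin r) * (IΨs lam - IΨs 0)|) + |Real.cos r * (IΨc lam - IΨc 0)| := by
                gcongr
                exact abs_add_le _ _
            _ = _ := by ring
      _ ≤ 1 * (C * (4 * |lam| * C / r) * (1/r)) + (1/r) * (C * (4 * |lam| * C / r) * 1)
          + r * (C * (4 * |lam| * C * (1/r) / r) * (1/r)) + 1 * (C * (4 * |lam| * C * (1/r) / r) * 1) := by
          have b1 : |(-(Real.cos r)) * (IΦs lam - IΦs 0)| ≤ 1 * (C * (4 * |lam| * C / r) * (1/r)) := by
            rw [abs_mul, abs_neg]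
            exact mul_le_mul hcr d1 (abs_nonneg _) one_pos.le
          have b2 : |(Real.sin r / r) * (IΦc lam - IΦc 0)| ≤ (1/r) * (C * (4 * |lam| * C / r) * 1) := by
            rw [abs_mul]
            exact mul_le_mul hsr d2 (abs_nonneg _) (by positivity)
          have b3 : |(r * Real.sin r) * (IΨs lam - IΨs 0)| ≤ r * (C * (4 * |lam| * C * (1/r) / r) * (1/r)) := by
            rw [abs_mul]
            exact mul_le_mul hrs d3 (abs_nonneg _) hr.le
          have b4 : |Real.cos r * (IΨc lam - IΨc 0)| ≤ 1 * (C * (4 * |lam| * C * (1/r) / r) * 1) := by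
            rw [abs_mul]
            exact mul_le_mul hcr d4 (abs_nonneg _) one_pos.le
          linarith
      _ ≤ K * |lam| := by
          rw [hKdef]
          apply le_of_eq
          field_simp
          ring
  -- conclude
  have hD0 : D 0 = 2 * Real.cos r := by
    have := hDG 0
    simpa using this
  refine ⟨hD0, ?_⟩
  have hGoal : HasDerivAt D (G 0) 0 := by
    rw [hasDerivAt_iff_tendsto_slope]
    have hGt : Filter.Tendsto G (nhdsWithin 0 {(0:ℝ)}ᶜ) (nhds (G 0)) := by
      have hKt : Filter.Tendsto (fun lam : ℝ => K * |lam|) (nhdsWithin 0 {(0:ℝ)}ᶜ) (nhds 0) := by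
        have h : Filter.Tendsto (fun lam : ℝ => K * |lam|) (nhds (0:ℝ)) (nhds (K * |(0:ℝ)|)) :=
          (continuous_const.mul continuous_abs).tendsto 0
        have h2 := h.mono_left (nhdsWithin_le_nhds (s := {(0:ℝ)}ᶜ))
        simpa using h2
      have hev : ∀ᶠ lam in nhdsWithin (0:ℝ) {(0:ℝ)}ᶜ, dist (G lam) (G 0) ≤ K * |lam| := by
        have hmem : Metric.closedBall (0:ℝ) δ ∈ nhdsWithin (0:ℝ) {(0:ℝ)}ᶜ :=
          nhdsWithin_le_nhds (Metric.closedBall_mem_nhds 0 hδ)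
        apply Filter.eventually_of_mem hmem
        intro lam hlam
        have h1 : |lam| ≤ δ := by
          simpa [Real.dist_eq] using hlam
        rw [Real.dist_eq]
        exact hGd lam h1
      have h0 : ∀ᶠ lam in nhdsWithin (0:ℝ) {(0:ℝ)}ᶜ, 0 ≤ dist (G lam) (G 0) :=
        Filter.Eventually.of_forall (fun _ => dist_nonneg)
      exact tendsto_iff_dist_tendsto_zero.mpr (squeeze_zero' h0 hev hKt)
    apply hGt.congr'
    apply Filter.eventually_of_mem self_mem_nhdsWithin
    intro lam hlam
    have hlne : lam ≠ 0 := hlam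
    rw [slope_def_field, hDG lam, hD0]
    field_simp
    ring
  have : G 0 = (Real.sin r / r) * ∫ s in (0:ℝ)..1, w s := hG0
  rw [← this]
  exact hGoal
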